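/- Let Π be a convex set of stochastic policies, ν a probability distribution on states, and ε ≥ 0. Assume π ∈ Π is an ε-local optimum of J_ν over Π, i.e., for all π' ∈ Π, lim_{α→0}(J_ν((1-α)π+απ') - J_ν(π))/α ≤ ε. Then for any optimal policy π_* (a policy whose value is v_*, with v_*(s) ≥ v_ρ(s) for all policies ρ and states s) and any probability distribution μ on states, 0 ≤ μ·(v_* - v_π) ≤ (1-γ)^{-1} · ‖d_{μ,π_*}/ν‖_∞ · (E_ν(Π)/(1-γ) + ε), where ‖d_{μ,π_*}/ν‖_∞ is the smallest constant C with d_{μ,π_*}(s) ≤ C ν(s) for all s (assumed finite). -/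

import Mathlib

open Matrix Filter Topology

section MDPdefs

variable {S A : Type*}

/-- `P` is a transition kernel: nonnegative and each row sums to one. -/
def IsKernel [Fintype S] (P : S → A → S → ℝ) : Prop :=
  ∀ s a, (∀ s', 0 ≤ P s a s') ∧ ∑ s', P s a s' = 1

/-- A stochastic policy: a probability distribution over actions in each state. -/
def IsPolicy [Fintype A] (π : S → A → ℝ) : Prop :=
  ∀ s, (∀ a, 0 ≤ π s a) ∧ ∑ a, π s a = 1

/-- A probability distribution over states. -/
def IsDist [Fintype S] (μ : S → ℝ) : Prop :=
  (∀ s, 0 ≤ μ s) ∧ ∑ s, μ s = 1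

/-- The reward vector `r_π(s) = ∑_a π(a|s) r(s,a)`. -/
def rPol [Fintype A] (r : S → A → ℝ) (π : S → A → ℝ) : S → ℝ :=
  fun s => ∑ a, π s a * r s a

/-- The stochastic matrix `P_π(s,s') = ∑_a π(a|s) P(s'|s,a)`. -/
def PPol [Fintype A] (P : S → A → S → ℝ) (π : S → A → ℝ) : Matrix S S ℝ :=
  Matrix.of fun s s' => ∑ a, π s a * P s a s'

/-- The Bellman operator `T_π v = r_π + γ P_π v`. -/
noncomputable def bellman [Fintype S] [Fintype A] (P : S → A → S → ℝ) (r : S → A → ℝ)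
    (γ : ℝ) (π : S → A → ℝ) (v : S → ℝ) : S → ℝ :=
  rPol r π + γ • (PPol P π *ᵥ v)

/-- The optimal Bellman operator `(Tv)(s) = max_a [r(s,a) + γ ∑_{s'} P(s'|s,a) v(s')]`. -/
noncomputable def optBellman [Fintype S] [Fintype A] [Nonempty A] (P : S → A → S → ℝ)
    (r : S → A → ℝ) (γ : ℝ) (v : S → ℝ) : S → ℝ :=
  fun s => Finset.univ.sup' Finset.univ_nonempty fun a => r s a + γ * ∑ s', P s a s' * v s'

/-- The value function of policy `π`, `v_π = (I - γ P_π)⁻¹ r_π`, the unique solution of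
`v = r_π + γ P_π v` when `0 ≤ γ < 1`. -/
noncomputable def valueFn [Fintype S] [Fintype A] [DecidableEq S] (P : S → A → S → ℝ)
    (r : S → A → ℝ) (γ : ℝ) (π : S → A → ℝ) : S → ℝ :=
  ((1 : Matrix S S ℝ) - γ • PPol P π)⁻¹ *ᵥ rPol r π

/-- The γ-weighted occupancy measure `d_{μ,π} = (1-γ) μ (I - γ P_π)⁻¹` (a row vector). -/
noncomputable def occ [Fintype S] [Fintype A] [DecidableEq S] (P : S → A → S → ℝ)
    (γ : ℝ) (μ : S → ℝ) (π : S → A → ℝ) : S → ℝ :=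
  (1 - γ) • (μ ᵥ* ((1 : Matrix S S ℝ) - γ • PPol P π)⁻¹)

/-- The stochastic mixture `(1-α)π + απ'`. -/
def mix (α : ℝ) (π π' : S → A → ℝ) : S → A → ℝ :=
  fun s a => (1 - α) * π s a + α * π' s a

/-- The `ν`-greedy-complexity `E_ν(Π) = sup_{ρ∈Π} inf_{ρ'∈Π} d_{ν,ρ}·(T v_ρ - T_{ρ'} v_ρ)`. -/
noncomputable def greedyCplx [Fintype S] [Fintype A] [Nonempty A] [DecidableEq S]
    (P : S → A → S → ℝ) (r : S → A → ℝ) (γ : ℝ) (ν : S → ℝ)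
    (Pol : Set (S → A → ℝ)) : ℝ :=
  ⨆ ρ : Pol, ⨅ ρ' : Pol,
    occ P γ ν (ρ : S → A → ℝ) ⬝ᵥ
      (optBellman P r γ (valueFn P r γ (ρ : S → A → ℝ)) -
        bellman P r γ (ρ' : S → A → ℝ) (valueFn P r γ (ρ : S → A → ℝ)))

/-- `π` is an `ε`-local optimum of `J_ν` over `Pol`: for every `π' ∈ Pol`, the (one-sided)
limit of `(ν·v_{(1-α)π+απ'} - ν·v_π)/α` as `α → 0⁺` exists and is at most `ε`. -/
def IsLocalOpt [Fintype S] [Fintype A] [DecidableEq S]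
    (P : S → A → S → ℝ) (r : S → A → ℝ) (γ : ℝ) (ν : S → ℝ)
    (Pol : Set (S → A → ℝ)) (π : S → A → ℝ) (ε : ℝ) : Prop :=
  ∀ π' ∈ Pol, ∃ L ≤ ε,
    Tendsto (fun α : ℝ =>
        (ν ⬝ᵥ valueFn P r γ (mix α π π') - ν ⬝ᵥ valueFn P r γ π) / α)
      (𝓝[>] 0) (𝓝 L)

end MDPdefs


open Finset

section AuxProofs

variable {S A : Type*} [Fintype S] [Fintype A] [DecidableEq S]

-- row properties of PPol
lemma PPol_nonneg {P : S → A → S → ℝ} (hP : IsKernel P) {ρ : S → A → ℝ} (hρ : IsPolicy ρ)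
    (s s' : S) : 0 ≤ PPol P ρ s s' :=
  Finset.sum_nonneg fun a _ => mul_nonneg ((hρ s).1 a) ((hP s a).1 s')

lemma PPol_row_sum {P : S → A → S → ℝ} (hP : IsKernel P) {ρ : S → A → ℝ} (hρ : IsPolicy ρ)
    (s : S) : ∑ s', PPol P ρ s s' = 1 := by
  have h1 : ∀ a, ∑ s', P s a s' = 1 := fun a => (hP s a).2
  calc ∑ s', PPol P ρ s s' = ∑ a, ∑ s', ρ s a * P s a s' := Finset.sum_comm
    _ = ∑ a, ρ s a * ∑ s', P s a s' := by simp [Finset.mul_sum]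
    _ = 1 := by simp [h1, (hρ s).2]

lemma PPol_mulVec_ge {P : S → A → S → ℝ} (hP : IsKernel P) {ρ : S → A → ℝ} (hρ : IsPolicy ρ)
    {y : S → ℝ} {c : ℝ} (hc : ∀ s, c ≤ y s) (s : S) : c ≤ (PPol P ρ *ᵥ y) s := by
  have : (PPol P ρ *ᵥ y) s = ∑ s', PPol P ρ s s' * y s' := rfl
  rw [this]
  calc c = ∑ s', PPol P ρ s s' * c := by
        rw [← Finset.sum_mul, PPol_row_sum hP hρ, one_mul]
    _ ≤ ∑ s', PPol P ρ s s' * y s' :=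
        Finset.sum_le_sum fun s' _ => mul_le_mul_of_nonneg_left (hc s') (PPol_nonneg hP hρ s s')

lemma PPol_mulVec_abs_le {P : S → A → S → ℝ} (hP : IsKernel P) {ρ : S → A → ℝ} (hρ : IsPolicy ρ)
    {y : S → ℝ} {c : ℝ} (hc : ∀ s, |y s| ≤ c) (s : S) : |(PPol P ρ *ᵥ y) s| ≤ c := by
  have : (PPol P ρ *ᵥ y) s = ∑ s', PPol P ρ s s' * y s' := rfl
  rw [this]
  calc |∑ s', PPol P ρ s s' * y s'| ≤ ∑ s', |PPol P ρ s s' * y s'| :=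
        Finset.abs_sum_le_sum_abs _ _
    _ ≤ ∑ s', PPol P ρ s s' * c := by
        refine Finset.sum_le_sum fun s' _ => ?_
        rw [abs_mul, abs_of_nonneg (PPol_nonneg hP hρ s s')]
        exact mul_le_mul_of_nonneg_left (hc s') (PPol_nonneg hP hρ s s')
    _ = c := by rw [← Finset.sum_mul, PPol_row_sum hP hρ, one_mul]

lemma det_ne_zero {P : S → A → S → ℝ} (hP : IsKernel P) {γ : ℝ} (hγ0 : 0 ≤ γ) (hγ1 : γ < 1)
    {ρ : S → A → ℝ} (hρ : IsPolicy ρ) : ((1 : Matrix S S ℝ) - γ • PPol P ρ).det ≠ 0 := by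
  intro hdet
  obtain ⟨v, hv0, hv⟩ := (Matrix.exists_mulVec_eq_zero_iff).2 hdet
  have hv' : ∀ s, v s = γ * (PPol P ρ *ᵥ v) s := by
    intro s
    have h := congrFun hv s
    rw [Matrix.sub_mulVec, Matrix.one_mulVec, Matrix.smul_mulVec] at h
    have h2 : v s - γ * (PPol P ρ *ᵥ v) s = 0 := h
    linarith
  obtain ⟨s1, hs1⟩ := Function.ne_iff.mp hv0
  haveI : Nonempty S := ⟨s1⟩
  obtain ⟨s₀, _, hmax⟩ := Finset.exists_max_image Finset.univ (fun s => |v s|) Finset.univ_nonempty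
  have hm0 : 0 < |v s₀| := lt_of_lt_of_le (abs_pos.mpr hs1) (hmax s1 (Finset.mem_univ s1))
  have hb : |v s₀| ≤ γ * |v s₀| := by
    have := PPol_mulVec_abs_le hP hρ (fun s => hmax s (Finset.mem_univ s)) s₀
    calc |v s₀| = γ * |(PPol P ρ *ᵥ v) s₀| := by rw [hv' s₀, abs_mul, abs_of_nonneg hγ0]
      _ ≤ γ * |v s₀| := mul_le_mul_of_nonneg_left this hγ0
  nlinarith

lemma isUnit_det {P : S → A → S → ℝ} (hP : IsKernel P) {γ : ℝ} (hγ0 : 0 ≤ γ) (hγ1 : γ < 1)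
    {ρ : S → A → ℝ} (hρ : IsPolicy ρ) : IsUnit ((1 : Matrix S S ℝ) - γ • PPol P ρ).det :=
  isUnit_iff_ne_zero.mpr (det_ne_zero hP hγ0 hγ1 hρ)

lemma inv_mulVec_nonneg {P : S → A → S → ℝ} (hP : IsKernel P) {γ : ℝ} (hγ0 : 0 ≤ γ)
    (hγ1 : γ < 1) {ρ : S → A → ℝ} (hρ : IsPolicy ρ) {x : S → ℝ} (hx : ∀ s, 0 ≤ x s) (s : S) :
    0 ≤ (((1 : Matrix S S ℝ) - γ • PPol P ρ)⁻¹ *ᵥ x) s := by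
  set M : Matrix S S ℝ := (1 : Matrix S S ℝ) - γ • PPol P ρ with hMdef
  set y : S → ℝ := M⁻¹ *ᵥ x with hydef
  have hMy : M *ᵥ y = x := by
    rw [hydef, Matrix.mulVec_mulVec, Matrix.mul_nonsing_inv _ (isUnit_det hP hγ0 hγ1 hρ),
      Matrix.one_mulVec]
  have hy : ∀ t, y t = x t + γ * (PPol P ρ *ᵥ y) t := by
    intro t
    have h := congrFun hMy t
    rw [hMdef, Matrix.sub_mulVec, Matrix.one_mulVec, Matrix.smul_mulVec] at h
    have h2 : y t - γ * (PPol P ρ *ᵥ y) t = x t := h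
    linarith
  haveI : Nonempty S := ⟨s⟩
  obtain ⟨s₀, _, hmin⟩ := Finset.exists_min_image Finset.univ y Finset.univ_nonempty
  have h1 : γ * y s₀ ≤ γ * (PPol P ρ *ᵥ y) s₀ :=
    mul_le_mul_of_nonneg_left (PPol_mulVec_ge hP hρ (fun t => hmin t (Finset.mem_univ t)) s₀) hγ0
  have h2 : 0 ≤ y s₀ := by
    have := hy s₀
    have := hx s₀
    nlinarith
  exact le_trans h2 (hmin s (Finset.mem_univ s))

lemma inv_entry_nonneg {P : S → A → S → ℝ} (hP : IsKernel P) {γ : ℝ} (hγ0 : 0 ≤ γ)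
    (hγ1 : γ < 1) {ρ : S → A → ℝ} (hρ : IsPolicy ρ) (s s' : S) :
    0 ≤ ((1 : Matrix S S ℝ) - γ • PPol P ρ)⁻¹ s s' := by
  have := inv_mulVec_nonneg hP hγ0 hγ1 hρ (x := Pi.single s' 1)
    (fun t => by by_cases h : t = s' <;> simp [h, Pi.single_apply]) s
  rw [Matrix.mulVec_single] at this
  simpa using this

end AuxProofs

section AuxProofs2

variable {S A : Type*} [Fintype S] [Fintype A] [DecidableEq S]

lemma occ_apply (P : S → A → S → ℝ) (γ : ℝ) (μ : S → ℝ) (ρ : S → A → ℝ) (s : S) :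
    occ P γ μ ρ s = (1 - γ) * ∑ s', μ s' * ((1 : Matrix S S ℝ) - γ • PPol P ρ)⁻¹ s' s := rfl

lemma occ_nonneg {P : S → A → S → ℝ} (hP : IsKernel P) {γ : ℝ} (hγ0 : 0 ≤ γ) (hγ1 : γ < 1)
    {ρ : S → A → ℝ} (hρ : IsPolicy ρ) {μ : S → ℝ} (hμ : ∀ s, 0 ≤ μ s) (s : S) :
    0 ≤ occ P γ μ ρ s := by
  rw [occ_apply]
  exact mul_nonneg (by linarith) (Finset.sum_nonneg fun s' _ =>
    mul_nonneg (hμ s') (inv_entry_nonneg hP hγ0 hγ1 hρ s' s))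

lemma occ_vecMul {P : S → A → S → ℝ} (hP : IsKernel P) {γ : ℝ} (hγ0 : 0 ≤ γ) (hγ1 : γ < 1)
    {ρ : S → A → ℝ} (hρ : IsPolicy ρ) (μ : S → ℝ) :
    occ P γ μ ρ ᵥ* ((1 : Matrix S S ℝ) - γ • PPol P ρ) = (1 - γ) • μ := by
  unfold occ
  rw [Matrix.smul_vecMul, Matrix.vecMul_vecMul,
    Matrix.nonsing_inv_mul _ (isUnit_det hP hγ0 hγ1 hρ), Matrix.vecMul_one]

lemma occ_decomp {P : S → A → S → ℝ} (hP : IsKernel P) {γ : ℝ} (hγ0 : 0 ≤ γ) (hγ1 : γ < 1)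
    {ρ : S → A → ℝ} (hρ : IsPolicy ρ) (μ : S → ℝ) (s : S) :
    occ P γ μ ρ s = (1 - γ) * μ s + γ * ∑ s', occ P γ μ ρ s' * PPol P ρ s' s := by
  have h := congrFun (occ_vecMul hP hγ0 hγ1 hρ μ) s
  rw [Matrix.vecMul_sub, Matrix.vecMul_one] at h
  have h2 : (occ P γ μ ρ ᵥ* (γ • PPol P ρ)) s = γ * ∑ s', occ P γ μ ρ s' * PPol P ρ s' s := by
    simp [Matrix.vecMul, dotProduct, Finset.mul_sum]
    exact Finset.sum_congr rfl fun s' _ => by ring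
  have h3 : occ P γ μ ρ s - (occ P γ μ ρ ᵥ* (γ • PPol P ρ)) s = (1 - γ) * μ s := h
  rw [h2] at h3
  linarith

lemma occ_ge {P : S → A → S → ℝ} (hP : IsKernel P) {γ : ℝ} (hγ0 : 0 ≤ γ) (hγ1 : γ < 1)
    {ρ : S → A → ℝ} (hρ : IsPolicy ρ) {μ : S → ℝ} (hμ : ∀ s, 0 ≤ μ s) (s : S) :
    (1 - γ) * μ s ≤ occ P γ μ ρ s := by
  rw [occ_decomp hP hγ0 hγ1 hρ μ s]
  have : 0 ≤ ∑ s', occ P γ μ ρ s' * PPol P ρ s' s :=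
    Finset.sum_nonneg fun s' _ =>
      mul_nonneg (occ_nonneg hP hγ0 hγ1 hρ hμ s') (PPol_nonneg hP hρ s' s)
  nlinarith

lemma occ_sum {P : S → A → S → ℝ} (hP : IsKernel P) {γ : ℝ} (hγ0 : 0 ≤ γ) (hγ1 : γ < 1)
    {ρ : S → A → ℝ} (hρ : IsPolicy ρ) {μ : S → ℝ} (hμ : IsDist μ) :
    ∑ s, occ P γ μ ρ s = 1 := by
  have h : ∑ s, occ P γ μ ρ s
      = (1 - γ) * ∑ s, μ s + γ * ∑ s, occ P γ μ ρ s := by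
    calc ∑ s, occ P γ μ ρ s
        = ∑ s, ((1 - γ) * μ s + γ * ∑ s', occ P γ μ ρ s' * PPol P ρ s' s) :=
          Finset.sum_congr rfl fun s _ => occ_decomp hP hγ0 hγ1 hρ μ s
      _ = (1 - γ) * ∑ s, μ s + γ * ∑ s, ∑ s', occ P γ μ ρ s' * PPol P ρ s' s := by
          rw [Finset.sum_add_distrib, ← Finset.mul_sum, ← Finset.mul_sum]
      _ = (1 - γ) * ∑ s, μ s + γ * ∑ s, occ P γ μ ρ s := by
          congr 1
          rw [Finset.sum_comm]
          congr 1
          refine Finset.sum_congr rfl fun s' _ => ?_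
          rw [← Finset.mul_sum, PPol_row_sum hP hρ, mul_one]
  rw [hμ.2] at h
  have h4 : (1 - γ) * ∑ s, occ P γ μ ρ s = (1 - γ) * 1 := by ring_nf at h ⊢; linarith
  exact mul_left_cancel₀ (ne_of_gt (by linarith : (0:ℝ) < 1 - γ)) h4

lemma valueFn_fixed {P : S → A → S → ℝ} (hP : IsKernel P) (r : S → A → ℝ) {γ : ℝ}
    (hγ0 : 0 ≤ γ) (hγ1 : γ < 1) {ρ : S → A → ℝ} (hρ : IsPolicy ρ) :
    ((1 : Matrix S S ℝ) - γ • PPol P ρ) *ᵥ valueFn P r γ ρ = rPol r ρ := by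
  unfold valueFn
  rw [Matrix.mulVec_mulVec, Matrix.mul_nonsing_inv _ (isUnit_det hP hγ0 hγ1 hρ),
    Matrix.one_mulVec]

lemma valueFn_bellman {P : S → A → S → ℝ} (hP : IsKernel P) (r : S → A → ℝ) {γ : ℝ}
    (hγ0 : 0 ≤ γ) (hγ1 : γ < 1) {ρ : S → A → ℝ} (hρ : IsPolicy ρ) :
    bellman P r γ ρ (valueFn P r γ ρ) = valueFn P r γ ρ := by
  have h := valueFn_fixed hP r hγ0 hγ1 hρ
  rw [Matrix.sub_mulVec, Matrix.one_mulVec, Matrix.smul_mulVec] at h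
  unfold bellman
  rw [← h]
  abel

end AuxProofs2

section AuxProofs3

variable {S A : Type*} [Fintype S] [Fintype A] [DecidableEq S]

/-- Performance difference lemma. -/
lemma perf_diff {P : S → A → S → ℝ} (hP : IsKernel P) (r : S → A → ℝ) {γ : ℝ}
    (hγ0 : 0 ≤ γ) (hγ1 : γ < 1) {ρ π : S → A → ℝ} (hρ : IsPolicy ρ) (hπ : IsPolicy π)
    (μ : S → ℝ) :
    μ ⬝ᵥ (valueFn P r γ ρ - valueFn P r γ π)
      = (1 - γ)⁻¹ * (occ P γ μ ρ ⬝ᵥ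
          (bellman P r γ ρ (valueFn P r γ π) - valueFn P r γ π)) := by
  set M : Matrix S S ℝ := (1 : Matrix S S ℝ) - γ • PPol P ρ with hMdef
  have hu : IsUnit M.det := isUnit_det hP hγ0 hγ1 hρ
  set vρ := valueFn P r γ ρ
  set vπ := valueFn P r γ π
  have key : M *ᵥ (vρ - vπ) = bellman P r γ ρ vπ - vπ := by
    rw [Matrix.mulVec_sub, valueFn_fixed hP r hγ0 hγ1 hρ]
    have hM : M *ᵥ vπ = vπ - γ • (PPol P ρ *ᵥ vπ) := by
      rw [hMdef, Matrix.sub_mulVec, Matrix.one_mulVec, Matrix.smul_mulVec]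
    rw [hM]
    unfold bellman
    abel
  have h2 : vρ - vπ = M⁻¹ *ᵥ (bellman P r γ ρ vπ - vπ) := by
    rw [← key, Matrix.mulVec_mulVec, Matrix.nonsing_inv_mul _ hu, Matrix.one_mulVec]
  rw [h2, Matrix.dotProduct_mulVec]
  have h3 : μ ᵥ* M⁻¹ = (1 - γ)⁻¹ • occ P γ μ ρ := by
    unfold occ
    rw [smul_smul, inv_mul_cancel₀ (ne_of_gt (by linarith : (0:ℝ) < 1 - γ)), one_smul]
  rw [h3, smul_dotProduct, smul_eq_mul]

lemma bellman_eq_sum (P : S → A → S → ℝ) (r : S → A → ℝ) (γ : ℝ) (ρ : S → A → ℝ)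
    (v : S → ℝ) (s : S) :
    bellman P r γ ρ v s = ∑ a, ρ s a * (r s a + γ * ∑ s', P s a s' * v s') := by
  have h1 : bellman P r γ ρ v s
      = (∑ a, ρ s a * r s a) + γ * ∑ s', (∑ a, ρ s a * P s a s') * v s' := rfl
  rw [h1]
  have h2 : ∑ s', (∑ a, ρ s a * P s a s') * v s'
      = ∑ a, ρ s a * ∑ s', P s a s' * v s' := by
    calc ∑ s', (∑ a, ρ s a * P s a s') * v s'
        = ∑ s', ∑ a, ρ s a * (P s a s' * v s') := by
          refine Finset.sum_congr rfl fun s' _ => ?_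
          rw [Finset.sum_mul]
          exact Finset.sum_congr rfl fun a _ => by ring
      _ = ∑ a, ∑ s', ρ s a * (P s a s' * v s') := Finset.sum_comm
      _ = ∑ a, ρ s a * ∑ s', P s a s' * v s' := by
          refine Finset.sum_congr rfl fun a _ => ?_
          rw [Finset.mul_sum]
  rw [h2, Finset.mul_sum, ← Finset.sum_add_distrib]
  exact Finset.sum_congr rfl fun a _ => by ring

lemma bellman_le_opt [Nonempty A] {P : S → A → S → ℝ} (r : S → A → ℝ) {γ : ℝ}
    {ρ : S → A → ℝ} (hρ : IsPolicy ρ) (v : S → ℝ) (s : S) :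
    bellman P r γ ρ v s ≤ optBellman P r γ v s := by
  rw [bellman_eq_sum]
  unfold optBellman
  calc ∑ a, ρ s a * (r s a + γ * ∑ s', P s a s' * v s')
      ≤ ∑ a, ρ s a * (Finset.univ.sup' Finset.univ_nonempty
          fun a => r s a + γ * ∑ s', P s a s' * v s') := by
        refine Finset.sum_le_sum fun a _ => mul_le_mul_of_nonneg_left ?_ ((hρ s).1 a)
        exact Finset.le_sup' (fun a => r s a + γ * ∑ s', P s a s' * v s') (Finset.mem_univ a)
    _ = _ := by rw [← Finset.sum_mul, (hρ s).2, one_mul]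

lemma mix_zero (π π' : S → A → ℝ) : mix (0:ℝ) π π' = π := by
  funext s a; simp [mix]

lemma PPol_mix (P : S → A → S → ℝ) (α : ℝ) (π π' : S → A → ℝ) :
    PPol P (mix α π π') = (1 - α) • PPol P π + α • PPol P π' := by
  ext s s'
  simp only [PPol, mix, Matrix.add_apply, Matrix.smul_apply, Matrix.of_apply, smul_eq_mul,
    Finset.mul_sum, add_mul]
  rw [← Finset.sum_add_distrib]
  exact Finset.sum_congr rfl fun a _ => by ring

lemma rPol_mix (r : S → A → ℝ) (α : ℝ) (π π' : S → A → ℝ) (s : S) :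
    rPol r (mix α π π') s = (1 - α) * rPol r π s + α * rPol r π' s := by
  simp only [rPol, mix, Finset.mul_sum, add_mul]
  rw [← Finset.sum_add_distrib]
  exact Finset.sum_congr rfl fun a _ => by ring

lemma bellman_mix (P : S → A → S → ℝ) (r : S → A → ℝ) (γ α : ℝ) (π π' : S → A → ℝ)
    (v : S → ℝ) :
    bellman P r γ (mix α π π') v
      = (1 - α) • bellman P r γ π v + α • bellman P r γ π' v := by
  funext s
  have hPv : (PPol P (mix α π π') *ᵥ v) s
      = (1 - α) * (PPol P π *ᵥ v) s + α * (PPol P π' *ᵥ v) s := by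
    rw [PPol_mix, Matrix.add_mulVec, Matrix.smul_mulVec, Matrix.smul_mulVec]
    simp [smul_eq_mul]
  simp only [bellman, Pi.add_apply, Pi.smul_apply, smul_eq_mul, rPol_mix, hPv]
  ring

end AuxProofs3

section AuxProofs4

variable {S A : Type*} [Fintype S] [Fintype A] [DecidableEq S]

lemma occ_mix_tendsto {P : S → A → S → ℝ} (hP : IsKernel P) {γ : ℝ} (hγ0 : 0 ≤ γ)
    (hγ1 : γ < 1) {π : S → A → ℝ} (π' : S → A → ℝ) (hπ : IsPolicy π) (ν w : S → ℝ) :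
    Filter.Tendsto (fun α : ℝ => occ P γ ν (mix α π π') ⬝ᵥ w) (𝓝 0)
      (𝓝 (occ P γ ν π ⬝ᵥ w)) := by
  have hM : ∀ α : ℝ, (1 : Matrix S S ℝ) - γ • PPol P (mix α π π')
      = ((1 : Matrix S S ℝ) - γ • PPol P π) + α • (γ • (PPol P π - PPol P π')) := by
    intro α
    rw [PPol_mix]
    ext i j
    simp only [Matrix.sub_apply, Matrix.add_apply, Matrix.smul_apply, smul_eq_mul,
      Matrix.one_apply]
    ring
  have hcontM : Continuous fun α : ℝ => (1 : Matrix S S ℝ) - γ • PPol P (mix α π π') := by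
    have hc : Continuous fun α : ℝ =>
        ((1 : Matrix S S ℝ) - γ • PPol P π) + α • (γ • (PPol P π - PPol P π')) :=
      continuous_const.add (continuous_id.smul continuous_const)
    exact hc.congr fun α => (hM α).symm
  have hdet0 : ((1 : Matrix S S ℝ) - γ • PPol P π).det ≠ 0 := det_ne_zero hP hγ0 hγ1 hπ
  have hIA : ContinuousAt Inv.inv ((1 : Matrix S S ℝ) - γ • PPol P (mix (0:ℝ) π π')) := by
    rw [mix_zero]
    refine continuousAt_matrix_inv _ ?_
    have h := NormedRing.inverse_continuousAt (isUnit_iff_ne_zero.mpr hdet0).unit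
    rwa [IsUnit.unit_spec] at h
  have hinv : ContinuousAt (fun α : ℝ =>
      ((1 : Matrix S S ℝ) - γ • PPol P (mix α π π'))⁻¹) 0 :=
    ContinuousAt.comp hIA hcontM.continuousAt
  have hdot : Continuous fun M : Matrix S S ℝ => ((1 - γ) • (ν ᵥ* M)) ⬝ᵥ w :=
    ((continuous_const.matrix_vecMul continuous_id).const_smul
      ((1:ℝ) - γ)).dotProduct continuous_const
  have hca : ContinuousAt (fun α : ℝ => occ P γ ν (mix α π π') ⬝ᵥ w) 0 := by
    have h := hdot.continuousAt.comp hinv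
    exact h
  have h0 : occ P γ ν (mix (0:ℝ) π π') ⬝ᵥ w = occ P γ ν π ⬝ᵥ w := by rw [mix_zero]
  have := hca.tendsto
  rwa [h0] at this

end AuxProofs4

section AuxProofs5

variable {S A : Type*} [Fintype S] [Fintype A] [DecidableEq S]

lemma localOpt_grad {P : S → A → S → ℝ} (hP : IsKernel P) (r : S → A → ℝ) {γ : ℝ}
    (hγ0 : 0 ≤ γ) (hγ1 : γ < 1) {Pol : Set (S → A → ℝ)} (hPol : ∀ ρ ∈ Pol, IsPolicy ρ)
    (hconv : ∀ ρ ∈ Pol, ∀ ρ' ∈ Pol, ∀ α : ℝ, 0 ≤ α → α ≤ 1 → mix α ρ ρ' ∈ Pol)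
    (ν : S → ℝ) {π : S → A → ℝ} (hπ : π ∈ Pol) {π' : S → A → ℝ} (hπ' : π' ∈ Pol) {L : ℝ}
    (hT : Filter.Tendsto (fun α : ℝ =>
        (ν ⬝ᵥ valueFn P r γ (mix α π π') - ν ⬝ᵥ valueFn P r γ π) / α)
      (𝓝[>] 0) (𝓝 L)) :
    occ P γ ν π ⬝ᵥ (bellman P r γ π' (valueFn P r γ π) - valueFn P r γ π)
      = (1 - γ) * L := by
  have hπp : IsPolicy π := hPol π hπ
  set vπ := valueFn P r γ π with hvπ
  set b := bellman P r γ π' vπ - vπ with hb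
  have htend2 : Filter.Tendsto (fun α : ℝ => (1 - γ)⁻¹ * (occ P γ ν (mix α π π') ⬝ᵥ b))
      (𝓝[>] 0) (𝓝 ((1 - γ)⁻¹ * (occ P γ ν π ⬝ᵥ b))) :=
    ((occ_mix_tendsto hP hγ0 hγ1 π' hπp ν b).const_mul ((1 - γ)⁻¹)).mono_left
      nhdsWithin_le_nhds
  have heq : ∀ᶠ α in 𝓝[>] (0:ℝ),
      (1 - γ)⁻¹ * (occ P γ ν (mix α π π') ⬝ᵥ b)
        = (ν ⬝ᵥ valueFn P r γ (mix α π π') - ν ⬝ᵥ vπ) / α := by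
    filter_upwards [Ioo_mem_nhdsGT (by norm_num : (0:ℝ) < 1)] with α hα
    have hmem : mix α π π' ∈ Pol := hconv π hπ π' hπ' α (le_of_lt hα.1) (le_of_lt hα.2)
    have hmixp : IsPolicy (mix α π π') := hPol _ hmem
    have hpd := perf_diff hP r hγ0 hγ1 hmixp hπp ν
    have hbm : bellman P r γ (mix α π π') vπ - vπ = α • b := by
      rw [hb, bellman_mix]
      rw [hvπ] at *
      rw [valueFn_bellman hP r hγ0 hγ1 hπp]
      funext s
      simp only [Pi.sub_apply, Pi.add_apply, Pi.smul_apply, smul_eq_mul]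
      ring
    rw [hbm, dotProduct_smul, smul_eq_mul, dotProduct_sub] at hpd
    rw [hpd, mul_div_assoc, mul_comm α _, mul_div_assoc, div_self (ne_of_gt hα.1), mul_one]
  have huniq : (1 - γ)⁻¹ * (occ P γ ν π ⬝ᵥ b) = L :=
    tendsto_nhds_unique (htend2.congr' heq) hT
  have hne : (1 : ℝ) - γ ≠ 0 := ne_of_gt (by linarith)
  field_simp at huniq
  linarith [huniq]

end AuxProofs5

section AuxProofs6

variable {S A : Type*} [Fintype S] [Fintype A] [DecidableEq S]

lemma pol_weighted_abs_le {ρ : S → A → ℝ} (hρ : IsPolicy ρ) (s : S) {q : A → ℝ} {K : ℝ}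
    (hq : ∀ a, |q a| ≤ K) : |∑ a, ρ s a * q a| ≤ K := by
  calc |∑ a, ρ s a * q a| ≤ ∑ a, |ρ s a * q a| := Finset.abs_sum_le_sum_abs _ _
    _ ≤ ∑ a, ρ s a * K := by
      refine Finset.sum_le_sum fun a _ => ?_
      rw [abs_mul, abs_of_nonneg ((hρ s).1 a)]
      exact mul_le_mul_of_nonneg_left (hq a) ((hρ s).1 a)
    _ = K := by rw [← Finset.sum_mul, (hρ s).2, one_mul]

lemma kernel_dot_abs_le {P : S → A → S → ℝ} (hP : IsKernel P) {v : S → ℝ} {m : ℝ}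
    (hv : ∀ s', |v s'| ≤ m) (s : S) (a : A) : |∑ s', P s a s' * v s'| ≤ m := by
  calc |∑ s', P s a s' * v s'| ≤ ∑ s', |P s a s' * v s'| := Finset.abs_sum_le_sum_abs _ _
    _ ≤ ∑ s', P s a s' * m := by
      refine Finset.sum_le_sum fun s' _ => ?_
      rw [abs_mul, abs_of_nonneg ((hP s a).1 s')]
      exact mul_le_mul_of_nonneg_left (hv s') ((hP s a).1 s')
    _ = m := by rw [← Finset.sum_mul, (hP s a).2, one_mul]

lemma valueFn_abs_le [Nonempty S] {P : S → A → S → ℝ} (hP : IsKernel P) (r : S → A → ℝ)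
    {γ : ℝ} (hγ0 : 0 ≤ γ) (hγ1 : γ < 1) {ρ : S → A → ℝ} (hρ : IsPolicy ρ) {R : ℝ}
    (hR : ∀ s a, |r s a| ≤ R) (s : S) : |valueFn P r γ ρ s| ≤ R / (1 - γ) := by
  set v := valueFn P r γ ρ with hv
  obtain ⟨s₀, _, hmax⟩ := Finset.exists_max_image Finset.univ (fun t => |v t|)
    Finset.univ_nonempty
  have hfix : v s₀ = rPol r ρ s₀ + γ * (PPol P ρ *ᵥ v) s₀ := by
    conv_lhs => rw [hv, ← valueFn_bellman hP r hγ0 hγ1 hρ]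
    rfl
  have h1 : |rPol r ρ s₀| ≤ R := pol_weighted_abs_le hρ s₀ fun a => hR s₀ a
  have h2 : |(PPol P ρ *ᵥ v) s₀| ≤ |v s₀| :=
    PPol_mulVec_abs_le hP hρ (fun t => hmax t (Finset.mem_univ t)) s₀
  have h3 : |v s₀| ≤ R + γ * |v s₀| := by
    calc |v s₀| = |rPol r ρ s₀ + γ * (PPol P ρ *ᵥ v) s₀| := by rw [← hfix]
      _ ≤ |rPol r ρ s₀| + |γ * (PPol P ρ *ᵥ v) s₀| := abs_add_le _ _
      _ ≤ R + γ * |v s₀| := by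
          rw [abs_mul, abs_of_nonneg hγ0]
          exact add_le_add h1 (mul_le_mul_of_nonneg_left h2 hγ0)
  have h4 : |v s₀| ≤ R / (1 - γ) := by
    rw [le_div_iff₀ (by linarith : (0:ℝ) < 1 - γ)]
    nlinarith
  exact le_trans (hmax s (Finset.mem_univ s)) h4

lemma optBellman_abs_le [Nonempty A] {P : S → A → S → ℝ} (hP : IsKernel P) (r : S → A → ℝ)
    {γ : ℝ} (hγ0 : 0 ≤ γ) {v : S → ℝ} {R m : ℝ} (hR : ∀ s a, |r s a| ≤ R)
    (hv : ∀ s', |v s'| ≤ m) (s : S) : |optBellman P r γ v s| ≤ R + γ * m := by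
  have hq : ∀ a, |r s a + γ * ∑ s', P s a s' * v s'| ≤ R + γ * m := by
    intro a
    calc |r s a + γ * ∑ s', P s a s' * v s'|
        ≤ |r s a| + |γ * ∑ s', P s a s' * v s'| := abs_add_le _ _
      _ ≤ R + γ * m := by
          rw [abs_mul, abs_of_nonneg hγ0]
          exact add_le_add (hR s a)
            (mul_le_mul_of_nonneg_left (kernel_dot_abs_le hP hv s a) hγ0)
  rw [abs_le]
  constructor
  · have := (abs_le.mp (hq (Classical.arbitrary A))).1
    calc -(R + γ * m) ≤ r s (Classical.arbitrary A)
          + γ * ∑ s', P s (Classical.arbitrary A) s' * v s' := this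
      _ ≤ optBellman P r γ v s :=
          Finset.le_sup' (fun a => r s a + γ * ∑ s', P s a s' * v s')
            (Finset.mem_univ (Classical.arbitrary A))
  · exact Finset.sup'_le _ _ fun a _ => (abs_le.mp (hq a)).2

lemma bellman_abs_le {P : S → A → S → ℝ} (hP : IsKernel P) (r : S → A → ℝ)
    {γ : ℝ} (hγ0 : 0 ≤ γ) {ρ : S → A → ℝ} (hρ : IsPolicy ρ) {v : S → ℝ} {R m : ℝ}
    (hR : ∀ s a, |r s a| ≤ R) (hv : ∀ s', |v s'| ≤ m) (s : S) :
    |bellman P r γ ρ v s| ≤ R + γ * m := by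
  rw [bellman_eq_sum]
  refine pol_weighted_abs_le hρ s fun a => ?_
  calc |r s a + γ * ∑ s', P s a s' * v s'|
      ≤ |r s a| + |γ * ∑ s', P s a s' * v s'| := abs_add_le _ _
    _ ≤ R + γ * m := by
        rw [abs_mul, abs_of_nonneg hγ0]
        exact add_le_add (hR s a)
          (mul_le_mul_of_nonneg_left (kernel_dot_abs_le hP hv s a) hγ0)

lemma occ_dot_abs_le {P : S → A → S → ℝ} (hP : IsKernel P) {γ : ℝ} (hγ0 : 0 ≤ γ)
    (hγ1 : γ < 1) {ρ : S → A → ℝ} (hρ : IsPolicy ρ) {ν : S → ℝ} (hν : IsDist ν)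
    {w : S → ℝ} {K : ℝ} (hw : ∀ s, |w s| ≤ K) : |occ P γ ν ρ ⬝ᵥ w| ≤ K := by
  have hocc : ∀ s, 0 ≤ occ P γ ν ρ s := occ_nonneg hP hγ0 hγ1 hρ hν.1
  calc |occ P γ ν ρ ⬝ᵥ w| ≤ ∑ s, |occ P γ ν ρ s * w s| := Finset.abs_sum_le_sum_abs _ _
    _ ≤ ∑ s, occ P γ ν ρ s * K := by
        refine Finset.sum_le_sum fun s _ => ?_
        rw [abs_mul, abs_of_nonneg (hocc s)]
        exact mul_le_mul_of_nonneg_left (hw s) (hocc s)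
    _ = K := by rw [← Finset.sum_mul, occ_sum hP hγ0 hγ1 hρ hν, one_mul]

end AuxProofs6

/-- an `ε`-local optimum `π` of `J_ν` over a convex `Π` satisfies the global
guarantee `0 ≤ μ·(v_* - v_π) ≤ (1-γ)⁻¹ ‖d_{μ,π_*}/ν‖_∞ (E_ν(Π)/(1-γ) + ε)`. -/
theorem stmt_4 {S A : Type*} [Fintype S] [Fintype A] [Nonempty S] [Nonempty A] [DecidableEq S]
    (P : S → A → S → ℝ) (hP : IsKernel P) (r : S → A → ℝ) (γ : ℝ)
    (hγ0 : 0 ≤ γ) (hγ1 : γ < 1)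
    (Pol : Set (S → A → ℝ)) (hPol : ∀ ρ ∈ Pol, IsPolicy ρ)
    (hconv : ∀ ρ ∈ Pol, ∀ ρ' ∈ Pol, ∀ α : ℝ, 0 ≤ α → α ≤ 1 → mix α ρ ρ' ∈ Pol)
    (ν : S → ℝ) (hν : IsDist ν) (ε : ℝ) (hε : 0 ≤ ε)
    (π : S → A → ℝ) (hπ : π ∈ Pol)
    (hloc : IsLocalOpt P r γ ν Pol π ε)
    (πs : S → A → ℝ) (hπs : IsPolicy πs)
    (hopt : ∀ ρ : S → A → ℝ, IsPolicy ρ → ∀ s, valueFn P r γ ρ s ≤ valueFn P r γ πs s)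
    (μ : S → ℝ) (hμ : IsDist μ)
    (C : ℝ) (hC : IsLeast {c : ℝ | ∀ s, occ P γ μ πs s ≤ c * ν s} C) :
    0 ≤ μ ⬝ᵥ (valueFn P r γ πs - valueFn P r γ π)
    ∧ μ ⬝ᵥ (valueFn P r γ πs - valueFn P r γ π)
        ≤ (1 - γ)⁻¹ * C * (greedyCplx P r γ ν Pol / (1 - γ) + ε) := by
  have hπp : IsPolicy π := hPol π hπ
  have hγne : (0:ℝ) < 1 - γ := by linarith
  -- Part 1: nonnegativity
  have hge : ∀ s, 0 ≤ (valueFn P r γ πs - valueFn P r γ π) s := fun s => by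
    have := hopt π hπp s; simp only [Pi.sub_apply]; linarith
  have part1 : 0 ≤ μ ⬝ᵥ (valueFn P r γ πs - valueFn P r γ π) := by
    show 0 ≤ ∑ s, μ s * (valueFn P r γ πs - valueFn P r γ π) s
    exact Finset.sum_nonneg fun s _ => mul_nonneg (hμ.1 s) (hge s)
  refine ⟨part1, ?_⟩
  -- w := T vπ - vπ ≥ 0
  have hwnn : ∀ s, 0 ≤ (optBellman P r γ (valueFn P r γ π) - valueFn P r γ π) s := by
    intro s
    have h1 : valueFn P r γ π s ≤ optBellman P r γ (valueFn P r γ π) s := by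
      conv_lhs => rw [← valueFn_bellman hP r hγ0 hγ1 hπp]
      exact bellman_le_opt r hπp (valueFn P r γ π) s
    simp only [Pi.sub_apply]; linarith
  -- C ≥ 0
  have hCge : (1:ℝ) ≤ C := by
    calc (1:ℝ) = ∑ s, occ P γ μ πs s := (occ_sum hP hγ0 hγ1 hπs hμ).symm
      _ ≤ ∑ s, C * ν s := Finset.sum_le_sum fun s _ => hC.1 s
      _ = C := by rw [← Finset.mul_sum, hν.2, mul_one]
  have hC0 : (0:ℝ) ≤ C := by linarith
  -- gradient bound from local optimality
  have hgrad : ∀ ρ' ∈ Pol, occ P γ ν π ⬝ᵥ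
      (bellman P r γ ρ' (valueFn P r γ π) - valueFn P r γ π) ≤ (1 - γ) * ε := by
    intro ρ' hρ'
    obtain ⟨L, hLε, hT⟩ := hloc ρ' hρ'
    rw [localOpt_grad hP r hγ0 hγ1 hPol hconv ν hπ hρ' hT]
    exact mul_le_mul_of_nonneg_left hLε (le_of_lt hγne)
  -- boundedness of the greedy complexity family
  haveI : Nonempty Pol := ⟨⟨π, hπ⟩⟩
  set R : ℝ := ∑ s, ∑ a, |r s a| with hRdef
  have hR : ∀ s a, |r s a| ≤ R := by
    intro s a
    calc |r s a| ≤ ∑ a', |r s a'| :=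
          Finset.single_le_sum (f := fun a' => |r s a'|)
            (fun a' _ => abs_nonneg _) (Finset.mem_univ a)
      _ ≤ R := by
          rw [hRdef]
          exact Finset.single_le_sum (f := fun s' => ∑ a', |r s' a'|)
            (fun s' _ => Finset.sum_nonneg fun a' _ => abs_nonneg _) (Finset.mem_univ s)
  set K : ℝ := 2 * (R + γ * (R / (1 - γ))) with hKdef
  set g : Pol → Pol → ℝ := fun ρ ρ' =>
    occ P γ ν (ρ : S → A → ℝ) ⬝ᵥ
      (optBellman P r γ (valueFn P r γ (ρ : S → A → ℝ)) -
        bellman P r γ (ρ' : S → A → ℝ) (valueFn P r γ (ρ : S → A → ℝ))) with hgdef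
  have hgreedy : greedyCplx P r γ ν Pol = ⨆ ρ : Pol, ⨅ ρ' : Pol, g ρ ρ' := rfl
  have hgabs : ∀ ρ ρ' : Pol, |g ρ ρ'| ≤ K := by
    intro ρ ρ'
    have hρp : IsPolicy (ρ : S → A → ℝ) := hPol _ ρ.2
    have hρ'p : IsPolicy (ρ' : S → A → ℝ) := hPol _ ρ'.2
    have hvab : ∀ s, |valueFn P r γ (ρ : S → A → ℝ) s| ≤ R / (1 - γ) :=
      valueFn_abs_le hP r hγ0 hγ1 hρp hR
    refine occ_dot_abs_le hP hγ0 hγ1 hρp hν fun s => ?_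
    have h1 := optBellman_abs_le hP r hγ0 hR hvab s
    have h2 := bellman_abs_le hP r hγ0 hρ'p hR hvab s
    have h3 : |(optBellman P r γ (valueFn P r γ (ρ : S → A → ℝ)) -
        bellman P r γ (ρ' : S → A → ℝ) (valueFn P r γ (ρ : S → A → ℝ))) s|
        ≤ |optBellman P r γ (valueFn P r γ (ρ : S → A → ℝ)) s|
          + |bellman P r γ (ρ' : S → A → ℝ) (valueFn P r γ (ρ : S → A → ℝ)) s| := by
      simp only [Pi.sub_apply]
      exact abs_sub _ _
    rw [hKdef]; linarith
  have hbddI : ∀ ρ : Pol, BddBelow (Set.range fun ρ' : Pol => g ρ ρ') := by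
    intro ρ
    exact ⟨-K, by rintro x ⟨ρ', rfl⟩; linarith [(abs_le.mp (hgabs ρ ρ')).1]⟩
  have hbddO : BddAbove (Set.range fun ρ : Pol => ⨅ ρ' : Pol, g ρ ρ') := by
    refine ⟨K, ?_⟩
    rintro x ⟨ρ, rfl⟩
    exact le_trans (ciInf_le (hbddI ρ) ρ) (abs_le.mp (hgabs ρ ρ)).2
  have hEsup : (⨅ ρ' : Pol, g ⟨π, hπ⟩ ρ') ≤ greedyCplx P r γ ν Pol := by
    rw [hgreedy]; exact le_ciSup hbddO ⟨π, hπ⟩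
  -- key bound: ν ⬝ᵥ w ≤ E/(1-γ) + ε
  have hlow : ∀ ρ' : Pol, (1 - γ) * (ν ⬝ᵥ (optBellman P r γ (valueFn P r γ π)
      - valueFn P r γ π)) - (1 - γ) * ε ≤ g ⟨π, hπ⟩ ρ' := by
    intro ρ'
    have h1 : (1 - γ) * (ν ⬝ᵥ (optBellman P r γ (valueFn P r γ π) - valueFn P r γ π))
        ≤ occ P γ ν π ⬝ᵥ (optBellman P r γ (valueFn P r γ π) - valueFn P r γ π) := by
      show (1 - γ) * ∑ s, ν s * _ ≤ ∑ s, occ P γ ν π s * _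
      rw [Finset.mul_sum]
      refine Finset.sum_le_sum fun s _ => ?_
      rw [← mul_assoc]
      exact mul_le_mul_of_nonneg_right (occ_ge hP hγ0 hγ1 hπp hν.1 s) (hwnn s)
    have h2 : occ P γ ν π ⬝ᵥ (optBellman P r γ (valueFn P r γ π) - valueFn P r γ π)
        = g ⟨π, hπ⟩ ρ' + occ P γ ν π ⬝ᵥ
            (bellman P r γ (ρ' : S → A → ℝ) (valueFn P r γ π) - valueFn P r γ π) := by
      rw [hgdef]
      simp only []
      rw [← dotProduct_add]
      congr 1
      abel
    have h3 := hgrad (ρ' : S → A → ℝ) ρ'.2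
    rw [h2] at h1
    linarith
  have hinf : (1 - γ) * (ν ⬝ᵥ (optBellman P r γ (valueFn P r γ π) - valueFn P r γ π))
      - (1 - γ) * ε ≤ ⨅ ρ' : Pol, g ⟨π, hπ⟩ ρ' := le_ciInf hlow
  have hkey : ν ⬝ᵥ (optBellman P r γ (valueFn P r γ π) - valueFn P r γ π)
      ≤ greedyCplx P r γ ν Pol / (1 - γ) + ε := by
    have h' := le_trans hinf hEsup
    rw [← sub_le_iff_le_add, le_div_iff₀ hγne]
    nlinarith [h']
  -- assembly
  have hperf := perf_diff hP r hγ0 hγ1 hπs hπp μ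
  have hDnn : ∀ s, 0 ≤ occ P γ μ πs s := occ_nonneg hP hγ0 hγ1 hπs hμ.1
  have hstep1 : occ P γ μ πs ⬝ᵥ (bellman P r γ πs (valueFn P r γ π) - valueFn P r γ π)
      ≤ occ P γ μ πs ⬝ᵥ (optBellman P r γ (valueFn P r γ π) - valueFn P r γ π) := by
    show ∑ s, _ ≤ ∑ s, _
    refine Finset.sum_le_sum fun s _ => mul_le_mul_of_nonneg_left ?_ (hDnn s)
    simp only [Pi.sub_apply]
    have := bellman_le_opt (P := P) (γ := γ) r hπs (valueFn P r γ π) s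
    linarith
  have hstep2 : occ P γ μ πs ⬝ᵥ (optBellman P r γ (valueFn P r γ π) - valueFn P r γ π)
      ≤ C * (ν ⬝ᵥ (optBellman P r γ (valueFn P r γ π) - valueFn P r γ π)) := by
    show ∑ s, _ ≤ C * ∑ s, ν s * _
    rw [Finset.mul_sum]
    refine Finset.sum_le_sum fun s _ => ?_
    rw [← mul_assoc]
    exact mul_le_mul_of_nonneg_right (hC.1 s) (hwnn s)
  have hstep3 : C * (ν ⬝ᵥ (optBellman P r γ (valueFn P r γ π) - valueFn P r γ π))
      ≤ C * (greedyCplx P r γ ν Pol / (1 - γ) + ε) :=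
    mul_le_mul_of_nonneg_left hkey hC0
  calc μ ⬝ᵥ (valueFn P r γ πs - valueFn P r γ π)
      = (1 - γ)⁻¹ * (occ P γ μ πs ⬝ᵥ
          (bellman P r γ πs (valueFn P r γ π) - valueFn P r γ π)) := hperf
    _ ≤ (1 - γ)⁻¹ * (C * (greedyCplx P r γ ν Pol / (1 - γ) + ε)) := by
        refine mul_le_mul_of_nonneg_left ?_ (le_of_lt (inv_pos.mpr hγne))
        linarith
    _ = (1 - γ)⁻¹ * C * (greedyCplx P r γ ν Pol / (1 - γ) + ε) := by ring
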